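/- Let F1 and F2 be sensori-computational devices that are output simulatable modulo relations R1 ⊆ A × B and R2 ⊆ C × E respectively, where R1 and R2 are length compatible. Then the direct product F1 × F2 is output simulatable modulo the product relation R_{1×2}, which relates (a1,c1)(a2,c2)…(an,cn) to (b1,e1)(b2,e2)…(bm,em) if and only if a1a2…an R1 b1b2…bm and c1c2…cn R2 e1e2…em. -/

import Mathlib

/-- A sensori-computational device: a finite nonempty set of states `V`,
a nonempty set `V0` of initial states, observations `Y`, a transition
labelling `tr`, and an output function `out` with nonempty values. -/
structure SCD (Y : Type) (C : Type) : Type 1 where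
  V : Type
  finV : Fintype V
  V0 : Set V
  V0_nonempty : V0.Nonempty
  tr : V → V → Set Y
  out : V → Set C
  out_nonempty : ∀ v, (out v).Nonempty

namespace SCD

variable {Y C : Type}

/-- `Traces F v s w`: string `s` reaches state `w` when traced from `v`. -/
inductive Traces (F : SCD Y C) : F.V → List Y → F.V → Prop
  | nil (v : F.V) : Traces F v [] v
  | cons {v w u : F.V} {y : Y} {s : List Y} :
      y ∈ F.tr v w → Traces F w s u → Traces F v (y :: s) u

/-- The set of states reached by `s` from some initial state. -/
def reached (F : SCD Y C) (s : List Y) : Set F.V :=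
  {w | ∃ v0 ∈ F.V0, F.Traces v0 s w}

/-- The (interaction) language of `F`. -/
def lang (F : SCD Y C) : Set (List Y) :=
  {s | (F.reached s).Nonempty}

/-- The set of outputs of all states reached by `s`. -/
def outs (F : SCD Y C) (s : List Y) : Set C :=
  ⋃ v ∈ F.reached s, F.out v

end SCD

/-- `F'` output simulates `F` modulo the relation `R`. -/
def OutSim {A B C : Type} (F : SCD A C) (F' : SCD B C)
    (R : List A → List B → Prop) : Prop :=
  ∀ s ∈ F.lang,
    (∃ t, R s t) ∧ ∀ t, R s t → t ∈ F'.lang ∧ F'.outs t ⊆ F.outs s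

/-- `F` is `R`-simulatable: some device output simulates `F` modulo `R`. -/
def Simulatable {A B C : Type} (F : SCD A C)
    (R : List A → List B → Prop) : Prop :=
  ∃ F' : SCD B C, OutSim F F' R

/-- Composition of relations (on strings), `R ⨟ S`. -/
def relComp {α β γ : Type*} (R : α → β → Prop) (S : β → γ → Prop) :
    α → γ → Prop :=
  fun a c => ∃ b, R a b ∧ S b c
/-- The direct product of two sensori-computational devices. -/
def SCD.prod {A B C E : Type} (F : SCD A C) (G : SCD B E) :
    SCD (A × B) (C × E) where
  V := F.V × G.V
  finV := by haveI := F.finV; haveI := G.finV; exact inferInstance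
  V0 := F.V0 ×ˢ G.V0
  V0_nonempty := F.V0_nonempty.prod G.V0_nonempty
  tr := fun p q => F.tr p.1 q.1 ×ˢ G.tr p.2 q.2
  out := fun p => F.out p.1 ×ˢ G.out p.2
  out_nonempty := fun p => (F.out_nonempty p.1).prod (G.out_nonempty p.2)


section Aux

variable {A B C E : Type}

lemma traces_prod_iff (F : SCD A C) (G : SCD B E)
    (v : F.V) (w : G.V) (s : List (A × B)) (u : F.V) (x : G.V) :
    (F.prod G).Traces (v, w) s (u, x) ↔
      F.Traces v (s.map Prod.fst) u ∧ G.Traces w (s.map Prod.snd) x := by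
  constructor
  · intro h
    induction s generalizing v w with
    | nil =>
      match h with
      | .nil _ =>
      exact ⟨SCD.Traces.nil _, SCD.Traces.nil _⟩
    | cons y s ih =>
      match h with
      | @SCD.Traces.cons _ _ _ _ p _ _ _ hy htr =>
        obtain ⟨p1, p2⟩ := p
        obtain ⟨ih1, ih2⟩ := ih p1 p2 htr
        exact ⟨SCD.Traces.cons hy.1 ih1, SCD.Traces.cons hy.2 ih2⟩
  · rintro ⟨h1, h2⟩
    induction s generalizing v w with
    | nil =>
      cases h1; cases h2; exact SCD.Traces.nil _
    | cons y s ih =>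
      cases h1 with
      | @cons _ w1 _ _ _ hy1 h1 =>
        cases h2 with
        | @cons _ w2 _ _ _ hy2 h2 =>
          exact SCD.Traces.cons (w := (w1, w2)) (show _ ∈ _ ×ˢ _ from ⟨hy1, hy2⟩) (ih _ _ h1 h2)

lemma reached_prod (F : SCD A C) (G : SCD B E) (s : List (A × B)) :
    (F.prod G).reached s = (F.reached (s.map Prod.fst)) ×ˢ (G.reached (s.map Prod.snd)) := by
  ext ⟨u, x⟩
  constructor
  · rintro ⟨⟨v, w⟩, hv0, htr⟩
    obtain ⟨h1, h2⟩ := (traces_prod_iff F G v w s u x).1 htr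
    exact ⟨⟨v, hv0.1, h1⟩, ⟨w, hv0.2, h2⟩⟩
  · rintro ⟨⟨v, hv0, h1⟩, ⟨w, hw0, h2⟩⟩
    exact ⟨(v, w), ⟨hv0, hw0⟩, (traces_prod_iff F G v w s u x).2 ⟨h1, h2⟩⟩

lemma lang_prod_iff (F : SCD A C) (G : SCD B E) (s : List (A × B)) :
    s ∈ (F.prod G).lang ↔ s.map Prod.fst ∈ F.lang ∧ s.map Prod.snd ∈ G.lang := by
  simp only [SCD.lang, Set.mem_setOf_eq, reached_prod]
  constructor
  · rintro ⟨⟨u, x⟩, hu, hx⟩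
    exact ⟨⟨u, hu⟩, ⟨x, hx⟩⟩
  · rintro ⟨⟨u, hu⟩, ⟨x, hx⟩⟩
    exact ⟨(u, x), hu, hx⟩

lemma outs_prod (F : SCD A C) (G : SCD B E) (s : List (A × B)) :
    (F.prod G).outs s = (F.outs (s.map Prod.fst)) ×ˢ (G.outs (s.map Prod.snd)) := by
  ext ⟨c, e⟩
  simp only [SCD.outs, Set.mem_iUnion, reached_prod, Set.mem_prod]
  constructor
  · rintro ⟨⟨u, x⟩, ⟨hu, hx⟩, hc, he⟩
    exact ⟨⟨u, hu, hc⟩, ⟨x, hx, he⟩⟩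
  · rintro ⟨⟨u, hu, hc⟩, ⟨x, hx, he⟩⟩
    exact ⟨(u, x), ⟨hu, hx⟩, hc, he⟩

end Aux

/-- if `F1` and `F2` are output simulatable modulo length
compatible relations `R1 ⊆ DA × B` and `R2 ⊆ DC × E`, then `F1 × F2` is
output simulatable modulo the product relation, which relates a string of
pairs to a string of pairs iff the componentwise projections are related by
`R1` and `R2` respectively. -/

theorem stmt5 {Y1 Y2 B E C1 C2 : Type}
    (F1 : SCD Y1 C1) (F2 : SCD Y2 C2)
    (R1 : List Y1 → List B → Prop) (R2 : List Y2 → List E → Prop)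
    (DA : Set (List Y1)) (DC : Set (List Y2))
    (hA : F1.lang ⊆ DA) (hC : F2.lang ⊆ DC)
    (hR1dom : ∀ a b, R1 a b → a ∈ DA)
    (hR2dom : ∀ c e, R2 c e → c ∈ DC)
    (hLC : ∀ a ∈ DA, ∀ c ∈ DC, a.length = c.length →
        ∃ b e, b.length = e.length ∧ R1 a b ∧ R2 c e)
    (h1 : Simulatable F1 R1) (h2 : Simulatable F2 R2) :
    Simulatable (F1.prod F2)
      (fun (s : List (Y1 × Y2)) (t : List (B × E)) =>
        R1 (s.map Prod.fst) (t.map Prod.fst) ∧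
        R2 (s.map Prod.snd) (t.map Prod.snd)) := by
  obtain ⟨F1', hF1'⟩ := h1
  obtain ⟨F2', hF2'⟩ := h2
  refine ⟨F1'.prod F2', ?_⟩
  intro s hs
  obtain ⟨hsa, hsc⟩ := (lang_prod_iff F1 F2 s).1 hs
  have hDA := hA hsa
  have hDC := hC hsc
  have hlen : (s.map Prod.fst).length = (s.map Prod.snd).length := by simp
  obtain ⟨_, h1a⟩ := hF1' _ hsa
  obtain ⟨_, h2c⟩ := hF2' _ hsc
  constructor
  · obtain ⟨b, e, hbe, hr1, hr2⟩ := hLC _ hDA _ hDC hlen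
    refine ⟨b.zip e, ?_, ?_⟩
    · rwa [List.map_fst_zip (le_of_eq hbe)]
    · rwa [List.map_snd_zip (ge_of_eq hbe)]
  · rintro t ⟨hr1, hr2⟩
    obtain ⟨htl1, hto1⟩ := h1a _ hr1
    obtain ⟨htl2, hto2⟩ := h2c _ hr2
    refine ⟨(lang_prod_iff F1' F2' t).2 ⟨htl1, htl2⟩, ?_⟩
    rw [outs_prod, outs_prod]
    exact Set.prod_mono hto1 hto2
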